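/- arXiv:1605.02212 — 4 statements merged into one kernel-verified Lean document; each statement's English description precedes it below -/
import Mathlib

section
/- Let (S,𝔉,τ) be a PM space with continuous triangle function and I an admissible ideal on ℕ×ℕ. A double sequence x = {x_{jk}} in S is strong I-statistically pre-Cauchy if and only if I-lim_{m,n→∞} (1/(m²n²)) Σ_{j,p ≤ m} Σ_{k,q ≤ n} d_L(F_{x_{jk} x_{pq}}, ε₀) = 0. -/
open Set

/-- A distance distribution function. -/
structure DDF where
  toFun : ℝ → ℝ
  mono' : Monotone toFun
  nonneg' : ∀ x, 0 ≤ toFun x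
  le_one' : ∀ x, toFun x ≤ 1
  zero' : ∀ x ≤ 0, toFun x = 0
  tendsto_one' : Filter.Tendsto toFun Filter.atTop (nhds 1)
  leftCont' : ∀ x > 0, ContinuousWithinAt toFun (Set.Iio x) x

instance : CoeFun DDF fun _ => ℝ → ℝ := ⟨DDF.toFun⟩

/-- The unit step at 0. -/
noncomputable def eps0 : DDF where
  toFun x := if 0 < x then 1 else 0
  mono' := by
    intro a b hab
    by_cases ha : 0 < a
    · simp [ha, lt_of_lt_of_le ha hab]
    · by_cases hb : 0 < b <;> simp [ha, hb]
  nonneg' := by intro x; split_ifs <;> norm_num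
  le_one' := by intro x; split_ifs <;> norm_num
  zero' := by intro x hx; simp [not_lt.mpr hx]
  tendsto_one' := by
    have h : (fun _ : ℝ => (1 : ℝ)) =ᶠ[Filter.atTop]
        fun x : ℝ => if 0 < x then (1:ℝ) else 0 := by
      filter_upwards [Filter.eventually_gt_atTop (0:ℝ)] with x hx
      simp [hx]
    exact tendsto_const_nhds.congr' h
  leftCont' := by
    intro x hx
    have h : (fun _ : ℝ => (1 : ℝ)) =ᶠ[nhdsWithin x (Set.Iio x)]
        fun y : ℝ => if 0 < y then (1:ℝ) else 0 := by
      have hev : ∀ᶠ y in nhds x, (0:ℝ) < y := eventually_gt_nhds hx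
      filter_upwards [nhdsWithin_le_nhds hev] with y hy
      simp [hy]
    have : Filter.Tendsto (fun y : ℝ => if 0 < y then (1:ℝ) else 0)
        (nhdsWithin x (Set.Iio x)) (nhds 1) := tendsto_const_nhds.congr' h
    simpa [ContinuousWithinAt, hx] using this

/-- The modified Lévy metric on distance distribution functions. -/
noncomputable def dL (F G : DDF) : ℝ :=
  sInf {h : ℝ | 0 < h ∧ h ≤ 1 ∧ ∀ x : ℝ, 0 < x → x < 1 / h →
    (F (x - h) - h ≤ G x ∧ G x ≤ F (x + h) + h ∧
     G (x - h) - h ≤ F x ∧ F x ≤ G (x + h) + h)}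

/-- A probabilistic metric space under a triangle function. -/
structure PMSpace (S : Type*) where
  F : S → S → DDF
  tri : DDF → DDF → DDF
  F_self : ∀ a, F a a = eps0
  F_ne : ∀ a b, a ≠ b → F a b ≠ eps0
  F_symm : ∀ a b, F a b = F b a
  F_triangle : ∀ a b c, ∀ x : ℝ, (tri (F a b) (F b c)) x ≤ (F a c) x
  tri_comm : ∀ G H, tri G H = tri H G
  tri_assoc : ∀ G H K, tri (tri G H) K = tri G (tri H K)
  tri_mono : ∀ G G' H, (∀ x, G x ≤ G' x) → ∀ x, (tri G H) x ≤ (tri G' H) x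
  tri_id : ∀ G, tri eps0 G = G

/-- Continuity of the triangle function with respect to the Lévy metric. -/
def TriContinuous {S : Type*} (P : PMSpace S) : Prop :=
  ∀ G H : DDF, ∀ ε > 0, ∃ η > 0, ∀ G' H' : DDF,
    dL G G' < η → dL H H' < η → dL (P.tri G H) (P.tri G' H') < ε

/-- Ideals, admissibility. -/
def IsIdeal {α : Type*} (I : Set (Set α)) : Prop :=
  ∅ ∈ I ∧ (∀ A B : Set α, A ∈ I → B ∈ I → A ∪ B ∈ I) ∧
    (∀ A B : Set α, B ⊆ A → A ∈ I → B ∈ I)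

def Admissible (I : Set (Set (ℕ × ℕ))) : Prop :=
  IsIdeal I ∧ Set.univ ∉ I ∧ ∀ p : ℕ × ℕ, ({p} : Set (ℕ × ℕ)) ∈ I

def StronglyAdmissible (I : Set (Set (ℕ × ℕ))) : Prop :=
  IsIdeal I ∧ Set.univ ∉ I ∧
    ∀ i : ℕ, ({i} ×ˢ (Set.univ : Set ℕ)) ∈ I ∧ ((Set.univ : Set ℕ) ×ˢ {i}) ∈ I

/-- `dens A m n` is `(1/(mn)) |{(j,k) ∈ A : j ≤ m, k ≤ n}|`. -/
noncomputable def dens (A : Set (ℕ × ℕ)) (m n : ℕ) : ℝ :=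
  ({jk ∈ A | 1 ≤ jk.1 ∧ jk.1 ≤ m ∧ 1 ≤ jk.2 ∧ jk.2 ≤ n}.ncard : ℝ) / (m * n)

/-- `dens2 A m n` is `(1/(m²n²)) |{((j,k),(p,q)) ∈ A : j,p ≤ m, k,q ≤ n}|`. -/
noncomputable def dens2 (A : Set ((ℕ × ℕ) × (ℕ × ℕ))) (m n : ℕ) : ℝ :=
  ({q ∈ A | 1 ≤ q.1.1 ∧ q.1.1 ≤ m ∧ 1 ≤ q.2.1 ∧ q.2.1 ≤ m ∧
      1 ≤ q.1.2 ∧ q.1.2 ≤ n ∧ 1 ≤ q.2.2 ∧ q.2.2 ≤ n}.ncard : ℝ) /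
    ((m : ℝ) ^ 2 * (n : ℝ) ^ 2)

variable {S : Type*}

/-- Strong `I`-statistically pre-Cauchy double sequences in a PM space, stated
via the Lévy distance `d_L(F_{x_{jk}x_{pq}}, ε₀) ≥ t`. -/
def StrongIStatPreCauchy (I : Set (Set (ℕ × ℕ))) (P : PMSpace S)
    (x : ℕ → ℕ → S) : Prop :=
  ∀ t > (0:ℝ), ∀ δ > (0:ℝ),
    {mn : ℕ × ℕ | δ ≤ dens2
      {q : (ℕ × ℕ) × (ℕ × ℕ) |
        t ≤ dL (P.F (x q.1.1 q.1.2) (x q.2.1 q.2.2)) eps0} mn.1 mn.2} ∈ I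

/-- `I`-limit of a real double sequence. -/
def ILim (I : Set (Set (ℕ × ℕ))) (y : ℕ → ℕ → ℝ) (L : ℝ) : Prop :=
  ∀ ε > (0:ℝ), {mn : ℕ × ℕ | ε ≤ |y mn.1 mn.2 - L|} ∈ I

/-- `(1/(m²n²)) Σ_{j,p ≤ m} Σ_{k,q ≤ n} d_L(F_{x_{jk}x_{pq}}, ε₀)`. -/
noncomputable def avgdL (P : PMSpace S) (x : ℕ → ℕ → S) (m n : ℕ) : ℝ :=
  (∑ j ∈ Finset.Icc 1 m, ∑ p ∈ Finset.Icc 1 m, ∑ k ∈ Finset.Icc 1 n,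
      ∑ q ∈ Finset.Icc 1 n, dL (P.F (x j k) (x p q)) eps0) /
    ((m : ℝ) ^ 2 * (n : ℝ) ^ 2)

lemma dL_nonneg (F G : DDF) : 0 ≤ dL F G :=
  Real.sInf_nonneg fun _ hh => hh.1.le

lemma dL_le_one (F G : DDF) : dL F G ≤ 1 := by
  apply csInf_le
  · exact ⟨0, fun h hh => hh.1.le⟩
  · refine ⟨one_pos, le_refl 1, ?_⟩
    intro y hy hy1
    refine ⟨?_, ?_, ?_, ?_⟩
    · linarith [F.le_one' (y - 1), G.nonneg' y]
    · linarith [G.le_one' y, F.nonneg' (y + 1)]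
    · linarith [G.le_one' (y - 1), F.nonneg' y]
    · linarith [F.le_one' y, G.nonneg' (y + 1)]

lemma avgdL_bounds {S : Type*} (P : PMSpace S) (x : ℕ → ℕ → S) (t : ℝ) (ht : 0 < t)
    (m n : ℕ) :
    0 ≤ avgdL P x m n ∧
    t * dens2 {q : (ℕ × ℕ) × (ℕ × ℕ) |
        t ≤ dL (P.F (x q.1.1 q.1.2) (x q.2.1 q.2.2)) eps0} m n ≤ avgdL P x m n ∧
    avgdL P x m n ≤ dens2 {q : (ℕ × ℕ) × (ℕ × ℕ) |
        t ≤ dL (P.F (x q.1.1 q.1.2) (x q.2.1 q.2.2)) eps0} m n + t := by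
  classical
  set g : (ℕ × ℕ) × (ℕ × ℕ) → ℝ :=
    fun q => dL (P.F (x q.1.1 q.1.2) (x q.2.1 q.2.2)) eps0 with hg
  set B : Finset ((ℕ × ℕ) × (ℕ × ℕ)) :=
    (Finset.Icc 1 m ×ˢ Finset.Icc 1 n) ×ˢ (Finset.Icc 1 m ×ˢ Finset.Icc 1 n) with hBdef
  set C : Finset ((ℕ × ℕ) × (ℕ × ℕ)) := B.filter (fun z => t ≤ g z) with hCdef
  set D : ℝ := (m : ℝ) ^ 2 * (n : ℝ) ^ 2 with hD
  have hgnn : ∀ z, 0 ≤ g z := fun z => dL_nonneg _ _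
  have hg1 : ∀ z, g z ≤ 1 := fun z => dL_le_one _ _
  have hsum : avgdL P x m n = (∑ z ∈ B, g z) / D := by
    unfold avgdL
    congr 1
    rw [hBdef, Finset.sum_product]
    simp_rw [Finset.sum_product]
    exact Finset.sum_congr rfl fun j _ => Finset.sum_comm
  have hdens : dens2 {q : (ℕ × ℕ) × (ℕ × ℕ) | t ≤ g q} m n = (C.card : ℝ) / D := by
    unfold dens2
    congr 2
    have hset : {q ∈ {q : (ℕ × ℕ) × (ℕ × ℕ) | t ≤ g q} | 1 ≤ q.1.1 ∧ q.1.1 ≤ m ∧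
        1 ≤ q.2.1 ∧ q.2.1 ≤ m ∧ 1 ≤ q.1.2 ∧ q.1.2 ≤ n ∧ 1 ≤ q.2.2 ∧ q.2.2 ≤ n}
        = (C : Set ((ℕ × ℕ) × (ℕ × ℕ))) := by
      ext z
      simp only [Set.mem_setOf_eq, hCdef, Finset.coe_filter, hBdef, Finset.mem_product,
        Finset.mem_Icc]
      tauto
    rw [hset, Set.ncard_coe_finset]
  have hBcard : (B.card : ℝ) = D := by
    simp [hBdef, hD, Finset.card_product, Nat.card_Icc]
    ring
  have hMar : t * (C.card : ℝ) ≤ ∑ z ∈ B, g z := by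
    calc t * (C.card : ℝ) = ∑ _z ∈ C, t := by
          rw [Finset.sum_const, nsmul_eq_mul, mul_comm]
      _ ≤ ∑ z ∈ C, g z := Finset.sum_le_sum fun z hz => (Finset.mem_filter.mp hz).2
      _ ≤ ∑ z ∈ B, g z := Finset.sum_le_sum_of_subset_of_nonneg
          (Finset.filter_subset _ _) (fun z _ _ => hgnn z)
  have hUp : ∑ z ∈ B, g z ≤ (C.card : ℝ) + t * D := by
    have hsplit := Finset.sum_filter_add_sum_filter_not B (fun z => t ≤ g z) g
    have h1 : ∑ z ∈ C, g z ≤ (C.card : ℝ) := by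
      calc ∑ z ∈ C, g z ≤ ∑ _z ∈ C, (1 : ℝ) := Finset.sum_le_sum fun z _ => hg1 z
        _ = (C.card : ℝ) := by simp
    have h2 : ∑ z ∈ B.filter (fun z => ¬ t ≤ g z), g z ≤ t * D := by
      calc ∑ z ∈ B.filter (fun z => ¬ t ≤ g z), g z
          ≤ ∑ _z ∈ B.filter (fun z => ¬ t ≤ g z), t :=
            Finset.sum_le_sum fun z hz => (not_le.mp (Finset.mem_filter.mp hz).2).le
        _ = ((B.filter (fun z => ¬ t ≤ g z)).card : ℝ) * t := by
            rw [Finset.sum_const, nsmul_eq_mul]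
        _ ≤ (B.card : ℝ) * t := by
            have := Finset.card_filter_le B (fun z => ¬ t ≤ g z)
            have : ((B.filter (fun z => ¬ t ≤ g z)).card : ℝ) ≤ (B.card : ℝ) :=
              Nat.cast_le.mpr this
            nlinarith
        _ = t * D := by rw [hBcard, mul_comm]
    calc ∑ z ∈ B, g z = ∑ z ∈ C, g z + ∑ z ∈ B.filter (fun z => ¬ t ≤ g z), g z := by
          rw [hCdef, hsplit]
      _ ≤ (C.card : ℝ) + t * D := add_le_add h1 h2
  have hDnn : 0 ≤ D := by positivity
  have hsumnn : 0 ≤ ∑ z ∈ B, g z := Finset.sum_nonneg fun z _ => hgnn z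
  refine ⟨by rw [hsum]; exact div_nonneg hsumnn hDnn, ?_, ?_⟩
  · rw [hsum, hdens]
    rcases eq_or_lt_of_le hDnn with h0 | hDpos
    · rw [← h0]
      simp
    · rw [le_div_iff₀ hDpos]
      have : t * ((C.card : ℝ) / D) * D = t * (C.card : ℝ) := by
        field_simp
      rw [this]
      exact hMar
  · rw [hsum, hdens]
    rcases eq_or_lt_of_le hDnn with h0 | hDpos
    · rw [← h0]
      simp [ht.le]
    · rw [div_le_iff₀ hDpos]
      have : ((C.card : ℝ) / D + t) * D = (C.card : ℝ) + t * D := by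
        field_simp
      rw [this]
      exact hUp

/-- A double sequence `x` in a PM space with continuous triangle function is
strong `I`-statistically pre-Cauchy iff
`I-lim (1/(m²n²)) Σ_{j,p ≤ m} Σ_{k,q ≤ n} d_L(F_{x_{jk}x_{pq}}, ε₀) = 0`. -/
theorem strongIStatPreCauchy_iff_avgdL
    (P : PMSpace S) (hτ : TriContinuous P)
    (I : Set (Set (ℕ × ℕ))) (hI : Admissible I)
    (x : ℕ → ℕ → S) :
    StrongIStatPreCauchy I P x ↔ ILim I (avgdL P x) 0 := by
  obtain ⟨⟨-, -, hdown⟩, -, -⟩ := hI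
  constructor
  · intro H ε hε
    have hε2 : (0:ℝ) < ε / 2 := by linarith
    refine hdown _ _ ?_ (H (ε/2) hε2 (ε/2) hε2)
    intro mn hmn
    simp only [Set.mem_setOf_eq] at hmn ⊢
    obtain ⟨h0, -, h2⟩ := avgdL_bounds P x (ε/2) hε2 mn.1 mn.2
    rw [sub_zero, abs_of_nonneg h0] at hmn
    linarith
  · intro H t ht δ hδ
    refine hdown _ _ ?_ (H (t * δ) (mul_pos ht hδ))
    intro mn hmn
    simp only [Set.mem_setOf_eq] at hmn ⊢
    obtain ⟨h0, h1, -⟩ := avgdL_bounds P x t ht mn.1 mn.2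
    rw [sub_zero, abs_of_nonneg h0]
    calc t * δ ≤ t * dens2 _ mn.1 mn.2 := by
          exact mul_le_mul_of_nonneg_left hmn ht.le
      _ ≤ avgdL P x mn.1 mn.2 := h1
end

section
/- Let (S,𝔉,τ) be a PM space with continuous triangle function, I a non-trivial strongly admissible ideal of ℕ×ℕ, and x = {x_{jk}} a double sequence in S that is strong I-statistically convergent to a point a. Then x has a subsequence that strongly converges to a; that is, there exist strictly increasing sequences (j_i) and (k_i) of natural numbers with d_L(F_{x_{j_i k_i} a}, ε₀) < 1/i for all i. -/
open Set

variable {S : Type*}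

/-- Strong `I`-statistical convergence, via `d_L(F_{x_{jk}a}, ε₀) ≥ t`. -/
def StrongIStatConv (I : Set (Set (ℕ × ℕ))) (P : PMSpace S)
    (x : ℕ → ℕ → S) (a : S) : Prop :=
  ∀ t > (0:ℝ), ∀ δ > (0:ℝ),
    {mn : ℕ × ℕ | δ ≤ dens
      {jk : ℕ × ℕ | t ≤ dL (P.F (x jk.1 jk.2) a) eps0} mn.1 mn.2} ∈ I

lemma ideal_biUnion_range {α : Type*} {I : Set (Set α)} (hI : IsIdeal I)
    (A : ℕ → Set α) (h : ∀ i, A i ∈ I) :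
    ∀ n : ℕ, (⋃ i ∈ Finset.range n, A i) ∈ I := by
  intro n
  induction n with
  | zero => simpa using hI.1
  | succ n ih =>
    have he : (⋃ i ∈ Finset.range (n+1), A i)
        = (⋃ i ∈ Finset.range n, A i) ∪ A n := by
      simp [Finset.range_add_one, Set.biUnion_insert, Set.union_comm]
    rw [he]
    exact hI.2.1 _ _ ih (h n)

/-- In a PM space, a double sequence that is strong `I`-statistically
convergent to `a` (for a non-trivial strongly admissible ideal `I`) has a
subsequence strongly converging to `a`: there are strictly increasing index
sequences `(j_i)`, `(k_i)` with `d_L(F_{x_{j_i k_i} a}, ε₀) < 1/i` for all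
`i ≥ 1`. -/
theorem strongIStatConv_has_strong_convergent_subseq
    (P : PMSpace S) (hτ : TriContinuous P)
    (I : Set (Set (ℕ × ℕ))) (hI : StronglyAdmissible I)
    (x : ℕ → ℕ → S) (a : S) (hx : StrongIStatConv I P x a) :
    ∃ js ks : ℕ → ℕ, StrictMono js ∧ StrictMono ks ∧
      ∀ i : ℕ, 1 ≤ i → dL (P.F (x (js i) (ks i)) a) eps0 < 1 / (i : ℝ) := by
  obtain ⟨hId, hUniv, hRows⟩ := hI
  -- Key step: for every `i`, beyond any bounds `J, K` there is a good index pair.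
  have key : ∀ i J K : ℕ, ∃ j k : ℕ, J < j ∧ K < k ∧
      dL (P.F (x j k) a) eps0 < 1 / ((i : ℝ) + 1) := by
    intro i J K
    by_contra hcon
    push_neg at hcon
    set t : ℝ := 1 / ((i : ℝ) + 1) with ht
    have htpos : (0:ℝ) < t := by positivity
    set A : Set (ℕ × ℕ) := {jk : ℕ × ℕ | t ≤ dL (P.F (x jk.1 jk.2) a) eps0}
      with hA
    have hB : {mn : ℕ × ℕ | (1/4 : ℝ) ≤ dens A mn.1 mn.2} ∈ I :=
      hx t htpos (1/4) (by norm_num)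
    -- Every pair `(j,k)` with `J < j`, `K < k` is bad.
    have hbad : ∀ j k : ℕ, J < j → K < k → (j, k) ∈ A := by
      intro j k hj hk
      exact hcon j k hj hk
    -- Density estimate: for large `m, n` the density is at least `1/4`.
    have hdens : ∀ m n : ℕ, 2*J+2 ≤ m → 2*K+2 ≤ n →
        (1/4 : ℝ) ≤ dens A m n := by
      intro m n hm hn
      have hJm : J ≤ m := by omega
      have hKn : K ≤ n := by omega
      set T : Set (ℕ × ℕ) :=
        {jk ∈ A | 1 ≤ jk.1 ∧ jk.1 ≤ m ∧ 1 ≤ jk.2 ∧ jk.2 ≤ n} with hT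
      have hTfin : T.Finite := by
        apply Set.Finite.subset ((Set.finite_Iic m).prod (Set.finite_Iic n))
        rintro ⟨j, k⟩ ⟨_, _, h2, _, h4⟩
        exact ⟨h2, h4⟩
      have hsub : (↑(Finset.Ioc J m ×ˢ Finset.Ioc K n) : Set (ℕ × ℕ)) ⊆ T := by
        rintro ⟨j, k⟩ hjk
        simp only [Finset.coe_product, Set.mem_prod, Finset.coe_Ioc,
          Set.mem_Ioc] at hjk
        obtain ⟨⟨hj1, hj2⟩, hk1, hk2⟩ := hjk
        exact ⟨hbad j k hj1 hk1, by omega, hj2, by omega, hk2⟩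
      have hcard : (m - J) * (n - K) ≤ T.ncard := by
        have := Set.ncard_le_ncard hsub hTfin
        rwa [Set.ncard_coe_finset, Finset.card_product, Nat.card_Ioc,
          Nat.card_Ioc] at this
      have hmn : (0:ℝ) < (m : ℝ) * (n : ℝ) := by
        have hm0 : 0 < m := by omega
        have hn0 : 0 < n := by omega
        positivity
      have hgoal : (1/4 : ℝ) ≤ (T.ncard : ℝ) / ((m : ℝ) * n) := by
        rw [div_le_div_iff₀ (by norm_num) hmn]
        have hle : ((m - J) * (n - K) : ℕ) ≤ (T.ncard : ℝ) := by
          exact_mod_cast hcard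
        have hineq : (1 : ℝ) * ((m : ℝ) * n) ≤ (((m - J) * (n - K) : ℕ) : ℝ) * 4 := by
          push_cast [Nat.cast_sub hJm, Nat.cast_sub hKn]
          have h1 : (J : ℝ) ≤ ((m:ℝ) - 2) / 2 := by
            have : ((2*J + 2 : ℕ) : ℝ) ≤ m := by exact_mod_cast hm
            push_cast at this; linarith
          have h2 : (K : ℝ) ≤ ((n:ℝ) - 2) / 2 := by
            have : ((2*K + 2 : ℕ) : ℝ) ≤ n := by exact_mod_cast hn
            push_cast at this; linarith
          nlinarith [Nat.cast_nonneg (α := ℝ) m, Nat.cast_nonneg (α := ℝ) n]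
        linarith
      exact hgoal
    -- `B` contains the whole corner set, which forces `univ ∈ I`.
    have hcorner : {mn : ℕ × ℕ | 2*J+2 ≤ mn.1 ∧ 2*K+2 ≤ mn.2}
        ⊆ {mn : ℕ × ℕ | (1/4 : ℝ) ≤ dens A mn.1 mn.2} := by
      rintro ⟨m, n⟩ ⟨hm, hn⟩
      exact hdens m n hm hn
    have hcornerI : {mn : ℕ × ℕ | 2*J+2 ≤ mn.1 ∧ 2*K+2 ≤ mn.2} ∈ I :=
      hId.2.2 _ _ hcorner hB
    have hrowsI : (⋃ i ∈ Finset.range (2*J+2),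
        ({i} ×ˢ (Set.univ : Set ℕ))) ∈ I :=
      ideal_biUnion_range hId _ (fun i => (hRows i).1) _
    have hcolsI : (⋃ i ∈ Finset.range (2*K+2),
        ((Set.univ : Set ℕ) ×ˢ ({i} : Set ℕ))) ∈ I :=
      ideal_biUnion_range hId _ (fun i => (hRows i).2) _
    have hcover : (Set.univ : Set (ℕ × ℕ)) ⊆
        ((⋃ i ∈ Finset.range (2*J+2), ({i} ×ˢ (Set.univ : Set ℕ))) ∪
         (⋃ i ∈ Finset.range (2*K+2), ((Set.univ : Set ℕ) ×ˢ ({i} : Set ℕ)))) ∪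
        {mn : ℕ × ℕ | 2*J+2 ≤ mn.1 ∧ 2*K+2 ≤ mn.2} := by
      rintro ⟨m, n⟩ -
      by_cases hm : m < 2*J+2
      · left; left
        simp only [Set.mem_iUnion, Finset.mem_range]
        exact ⟨m, hm, rfl, trivial⟩
      · by_cases hn : n < 2*K+2
        · left; right
          simp only [Set.mem_iUnion, Finset.mem_range]
          exact ⟨n, hn, trivial, rfl⟩
        · right; exact ⟨by omega, by omega⟩
    have : (Set.univ : Set (ℕ × ℕ)) ∈ I :=
      hId.2.2 _ _ hcover (hId.2.1 _ _ (hId.2.1 _ _ hrowsI hcolsI) hcornerI)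
    exact hUniv this
  -- Extract the subsequence by recursion.
  choose jf kf hjf hkf hdf using key
  let p : ℕ → ℕ × ℕ := fun n =>
    Nat.rec (jf 0 0 0, kf 0 0 0)
      (fun n q => (jf n q.1 q.2, kf n q.1 q.2)) n
  have hp : ∀ n : ℕ, p (n+1) = (jf n (p n).1 (p n).2,
      kf n (p n).1 (p n).2) := fun n => rfl
  refine ⟨fun n => (p n).1, fun n => (p n).2, ?_, ?_, ?_⟩
  · apply strictMono_nat_of_lt_succ
    intro n
    rw [hp n]
    exact hjf n (p n).1 (p n).2
  · apply strictMono_nat_of_lt_succ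
    intro n
    rw [hp n]
    exact hkf n (p n).1 (p n).2
  · intro i hi
    obtain ⟨n, rfl⟩ := Nat.exists_eq_add_of_le hi
    simp only [Nat.add_comm 1 n]
    have h := hdf n (p n).1 (p n).2
    have e : ((n : ℝ) + 1) = ((n + 1 : ℕ) : ℝ) := by push_cast; ring
    rw [e] at h
    exact h
end

section
/- Let (S,𝔉,τ) be a PM space and I a strongly admissible ideal on ℕ×ℕ. Every strong I*-statistically pre-Cauchy double sequence in S is strong I-statistically pre-Cauchy. -/
open Set

variable {S : Type*}

/-- Strong `I*`-statistically pre-Cauchy: there is `M ∈ F(I)` such that the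
pre-Cauchy counting ratios tend to `0` as `m,n → ∞` along `(m,n) ∈ M`. -/
def StrongIStarStatPreCauchy (I : Set (Set (ℕ × ℕ))) (P : PMSpace S)
    (x : ℕ → ℕ → S) : Prop :=
  ∃ M : Set (ℕ × ℕ), Mᶜ ∈ I ∧ ∀ t > (0:ℝ), ∀ ε > (0:ℝ), ∃ N : ℕ,
    ∀ m n : ℕ, (m, n) ∈ M → N ≤ m → N ≤ n →
      dens2 {q : (ℕ × ℕ) × (ℕ × ℕ) |
        t ≤ dL (P.F (x q.1.1 q.1.2) (x q.2.1 q.2.2)) eps0} m n < ε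

/-- For a strongly admissible ideal `I`, every strong `I*`-statistically
pre-Cauchy double sequence in a PM space is strong `I`-statistically
pre-Cauchy. -/
theorem strongIStarStatPreCauchy_implies_strongIStatPreCauchy
    (P : PMSpace S)
    (I : Set (Set (ℕ × ℕ))) (hI : StronglyAdmissible I)
    (x : ℕ → ℕ → S) (hx : StrongIStarStatPreCauchy I P x) :
    StrongIStatPreCauchy I P x := by
  obtain ⟨⟨hempty, hunion, hsub⟩, -, hsingle⟩ := hI
  obtain ⟨M, hM, hlim⟩ := hx
  -- horizontal and vertical bands are in I
  have hband1 : ∀ N : ℕ, {p : ℕ × ℕ | p.1 < N} ∈ I := by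
    intro N
    induction N with
    | zero => simpa using hempty
    | succ N ih =>
      have heq : {p : ℕ × ℕ | p.1 < N + 1} =
          {p : ℕ × ℕ | p.1 < N} ∪ ({N} ×ˢ (Set.univ : Set ℕ)) := by
        ext p
        simp only [Set.mem_setOf_eq, Set.mem_union, Set.mem_prod,
          Set.mem_singleton_iff, Set.mem_univ, and_true, Nat.lt_succ_iff_lt_or_eq]
      rw [heq]
      exact hunion _ _ ih (hsingle N).1
  have hband2 : ∀ N : ℕ, {p : ℕ × ℕ | p.2 < N} ∈ I := by
    intro N
    induction N with
    | zero => simpa using hempty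
    | succ N ih =>
      have heq : {p : ℕ × ℕ | p.2 < N + 1} =
          {p : ℕ × ℕ | p.2 < N} ∪ ((Set.univ : Set ℕ) ×ˢ {N}) := by
        ext p
        simp only [Set.mem_setOf_eq, Set.mem_union, Set.mem_prod,
          Set.mem_singleton_iff, Set.mem_univ, true_and, Nat.lt_succ_iff_lt_or_eq]
      rw [heq]
      exact hunion _ _ ih (hsingle N).2
  intro t ht δ hδ
  obtain ⟨N, hN⟩ := hlim t ht δ hδ
  apply hsub (Mᶜ ∪ ({p : ℕ × ℕ | p.1 < N} ∪ {p : ℕ × ℕ | p.2 < N}))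
  · intro mn hmn
    by_contra hcon
    simp only [Set.mem_union, Set.mem_compl_iff, Set.mem_setOf_eq, not_or,
      not_not, not_lt] at hcon
    obtain ⟨hmem, h1, h2⟩ := hcon
    exact absurd hmn (not_le.mpr (hN mn.1 mn.2 hmem h1 h2))
  · exact hunion _ _ hM (hunion _ _ (hband1 N) (hband2 N))
end

section
/- Let (S,𝔉,τ) be a PM space and I a strongly admissible ideal on ℕ×ℕ with property (AP₂). Then a double sequence in S is strong I-statistically pre-Cauchy if and only if it is strong I*-statistically pre-Cauchy. -/
open Set

variable {S : Type*}

/-- A set contained in a finite union of rows and columns of `ℕ×ℕ`. -/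
def RowColBounded (E : Set (ℕ × ℕ)) : Prop :=
  ∃ s : Finset ℕ, E ⊆ (⋃ i ∈ s, ({i} : Set ℕ) ×ˢ (Set.univ : Set ℕ)) ∪
    ⋃ i ∈ s, (Set.univ : Set ℕ) ×ˢ ({i} : Set ℕ)

/-- Property (AP₂) of an ideal on `ℕ×ℕ`. -/
def AP2 (I : Set (Set (ℕ × ℕ))) : Prop :=
  ∀ A : ℕ → Set (ℕ × ℕ), (∀ j, A j ∈ I) → (Pairwise (Function.onFun Disjoint A)) →
    ∃ B : ℕ → Set (ℕ × ℕ), (∀ j, RowColBounded (symmDiff (A j) (B j))) ∧ (⋃ j, B j) ∈ I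

lemma dens2_mono {A B : Set ((ℕ × ℕ) × (ℕ × ℕ))} (h : A ⊆ B) (m n : ℕ) :
    dens2 A m n ≤ dens2 B m n := by
  unfold dens2
  have hfin : {q ∈ B | 1 ≤ q.1.1 ∧ q.1.1 ≤ m ∧ 1 ≤ q.2.1 ∧ q.2.1 ≤ m ∧
      1 ≤ q.1.2 ∧ q.1.2 ≤ n ∧ 1 ≤ q.2.2 ∧ q.2.2 ≤ n}.Finite := by
    have hsub : {q : (ℕ × ℕ) × (ℕ × ℕ) | q ∈ B ∧ 1 ≤ q.1.1 ∧ q.1.1 ≤ m ∧ 1 ≤ q.2.1 ∧ q.2.1 ≤ m ∧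
        1 ≤ q.1.2 ∧ q.1.2 ≤ n ∧ 1 ≤ q.2.2 ∧ q.2.2 ≤ n} ⊆
        (Set.Iic ((m, n) : ℕ × ℕ)) ×ˢ (Set.Iic ((m, n) : ℕ × ℕ)) := by
      rintro q ⟨-, -, h1, -, h2, -, h3, -, h4⟩
      exact ⟨⟨h1, h3⟩, ⟨h2, h4⟩⟩
    exact Set.Finite.subset ((Set.finite_Iic ((m, n) : ℕ × ℕ)).prod
      (Set.finite_Iic ((m, n) : ℕ × ℕ))) hsub
  have hcard : ({q ∈ A | 1 ≤ q.1.1 ∧ q.1.1 ≤ m ∧ 1 ≤ q.2.1 ∧ q.2.1 ≤ m ∧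
      1 ≤ q.1.2 ∧ q.1.2 ≤ n ∧ 1 ≤ q.2.2 ∧ q.2.2 ≤ n}.ncard : ℝ) ≤
      ({q ∈ B | 1 ≤ q.1.1 ∧ q.1.1 ≤ m ∧ 1 ≤ q.2.1 ∧ q.2.1 ≤ m ∧
      1 ≤ q.1.2 ∧ q.1.2 ≤ n ∧ 1 ≤ q.2.2 ∧ q.2.2 ≤ n}.ncard : ℝ) := by
    have hss : {q ∈ A | 1 ≤ q.1.1 ∧ q.1.1 ≤ m ∧ 1 ≤ q.2.1 ∧ q.2.1 ≤ m ∧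
        1 ≤ q.1.2 ∧ q.1.2 ≤ n ∧ 1 ≤ q.2.2 ∧ q.2.2 ≤ n} ⊆
        {q ∈ B | 1 ≤ q.1.1 ∧ q.1.1 ≤ m ∧ 1 ≤ q.2.1 ∧ q.2.1 ≤ m ∧
        1 ≤ q.1.2 ∧ q.1.2 ≤ n ∧ 1 ≤ q.2.2 ∧ q.2.2 ≤ n} := by
      rintro q ⟨hq1, hq2⟩
      exact ⟨h hq1, hq2⟩
    exact_mod_cast Set.ncard_le_ncard hss hfin
  exact div_le_div_of_nonneg_right hcard (by positivity)

lemma finunion_mem {I : Set (Set (ℕ × ℕ))} (hI : IsIdeal I) (s : Finset ℕ)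
    (f : ℕ → Set (ℕ × ℕ)) (h : ∀ i ∈ s, f i ∈ I) : (⋃ i ∈ s, f i) ∈ I := by
  classical
  induction s using Finset.induction with
  | empty => simpa using hI.1
  | insert a s hni ih =>
    rw [Finset.set_biUnion_insert]
    exact hI.2.1 _ _ (h a (Finset.mem_insert_self a s))
      (ih fun i hi => h i (Finset.mem_insert_of_mem hi))

lemma lowRows_mem {I : Set (Set (ℕ × ℕ))} (hI : StronglyAdmissible I) (N : ℕ) :
    {mn : ℕ × ℕ | mn.1 < N ∨ mn.2 < N} ∈ I := by
  have key : (⋃ i ∈ Finset.range N,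
      (({i} : Set ℕ) ×ˢ (Set.univ : Set ℕ) ∪ (Set.univ : Set ℕ) ×ˢ ({i} : Set ℕ))) ∈ I := by
    apply finunion_mem hI.1
    intro i _
    exact hI.1.2.1 _ _ (hI.2.2 i).1 (hI.2.2 i).2
  apply hI.1.2.2 _ _ _ key
  rintro ⟨m, n⟩ (hm | hn)
  · simp only [Set.mem_iUnion]
    exact ⟨m, Finset.mem_range.mpr hm, Or.inl ⟨rfl, trivial⟩⟩
  · simp only [Set.mem_iUnion]
    exact ⟨n, Finset.mem_range.mpr hn, Or.inr ⟨trivial, rfl⟩⟩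

/-- For a strongly admissible ideal `I` with property (AP₂), a double sequence
in a PM space is strong `I`-statistically pre-Cauchy iff it is strong
`I*`-statistically pre-Cauchy. -/
theorem strongIStatPreCauchy_iff_strongIStarStatPreCauchy
    (P : PMSpace S) (hτ : TriContinuous P)
    (I : Set (Set (ℕ × ℕ))) (hI : StronglyAdmissible I) (hAP : AP2 I)
    (x : ℕ → ℕ → S) :
    StrongIStatPreCauchy I P x ↔ StrongIStarStatPreCauchy I P x := by
  classical
  set Abad : ℝ → Set ((ℕ × ℕ) × (ℕ × ℕ)) := fun t =>
    {q : (ℕ × ℕ) × (ℕ × ℕ) | t ≤ dL (P.F (x q.1.1 q.1.2) (x q.2.1 q.2.2)) eps0}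
    with hAbad
  have hAbad_mono : ∀ {s t : ℝ}, s ≤ t → Abad t ⊆ Abad s := by
    intro s t hst q hq
    exact le_trans hst hq
  constructor
  · -- I ⇒ I*
    intro h
    -- the bad index sets for t = δ = 1/(i+1)
    set Pst : ℕ → Set (ℕ × ℕ) := fun i =>
      {mn : ℕ × ℕ | (1 : ℝ) / (i + 1) ≤ dens2 (Abad ((1 : ℝ) / (i + 1))) mn.1 mn.2}
      with hPst
    have hPstI : ∀ i, Pst i ∈ I := by
      intro i
      have hpos : (0 : ℝ) < 1 / (i + 1) := by positivity
      exact h _ hpos _ hpos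
    -- disjointified version
    set Aset : ℕ → Set (ℕ × ℕ) := fun j => Pst j \ ⋃ k < j, Pst k with hAset
    have hAsetI : ∀ j, Aset j ∈ I := fun j =>
      hI.1.2.2 _ _ Set.diff_subset (hPstI j)
    have hAdisj : Pairwise (Function.onFun Disjoint Aset) := by
      intro j k hjk
      rcases hjk.lt_or_gt with hlt | hlt
      · refine Set.disjoint_left.mpr fun mn hj hk => ?_
        exact hk.2 (Set.mem_biUnion hlt hj.1)
      · refine Set.disjoint_left.mpr fun mn hj hk => ?_
        exact hj.2 (Set.mem_biUnion hlt hk.1)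
    obtain ⟨B, hB1, hB2⟩ := hAP Aset hAsetI hAdisj
    refine ⟨(⋃ j, B j)ᶜ, by simpa using hB2, ?_⟩
    intro t ht ε hε
    obtain ⟨i, hi⟩ := exists_nat_one_div_lt (lt_min ht hε)
    -- the finsets of rows/columns for each j ≤ i
    choose s hs using hB1
    refine ⟨((Finset.range (i + 1)).sup fun j => (s j).sup id) + 1, ?_⟩
    intro m n hM hm hn
    set N := ((Finset.range (i + 1)).sup fun j => (s j).sup id) + 1 with hN
    -- first: (m,n) ∉ Pst i
    have hnotP : (m, n) ∉ Pst i := by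
      intro hmem
      -- take minimal index j with (m,n) ∈ Pst j
      have hex : ∃ j, (m, n) ∈ Pst j := ⟨i, hmem⟩
      set j := Nat.find hex with hj
      have hji : j ≤ i := Nat.find_min' hex hmem
      have hAj : (m, n) ∈ Aset j := by
        refine ⟨Nat.find_spec hex, ?_⟩
        intro hcon
        rw [Set.mem_iUnion₂] at hcon
        obtain ⟨k, hk, hkm⟩ := hcon
        exact Nat.find_min hex hk hkm
      have hnotB : (m, n) ∉ B j := fun hb => hM (Set.mem_iUnion.mpr ⟨j, hb⟩)
      have hsd : (m, n) ∈ symmDiff (Aset j) (B j) := Or.inl ⟨hAj, hnotB⟩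
      have := hs j hsd
      rcases this with hrow | hcol
      · rw [Set.mem_iUnion₂] at hrow
        obtain ⟨a, ha, ham⟩ := hrow
        have hma : m = a := ham.1
        have : a ≤ (Finset.range (i + 1)).sup fun j => (s j).sup id := by
          calc a ≤ (s j).sup id := Finset.le_sup (f := id) ha
          _ ≤ _ := Finset.le_sup (f := fun j => (s j).sup id) (Finset.mem_range.mpr (Nat.lt_succ_of_le hji))
        omega
      · rw [Set.mem_iUnion₂] at hcol
        obtain ⟨a, ha, ham⟩ := hcol
        have hna : n = a := ham.2
        have : a ≤ (Finset.range (i + 1)).sup fun j => (s j).sup id := by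
          calc a ≤ (s j).sup id := Finset.le_sup (f := id) ha
          _ ≤ _ := Finset.le_sup (f := fun j => (s j).sup id) (Finset.mem_range.mpr (Nat.lt_succ_of_le hji))
        omega
    -- hence small density
    have hlt : dens2 (Abad ((1 : ℝ) / (i + 1))) m n < 1 / (i + 1) := by
      simp only [hPst, Set.mem_setOf_eq, not_le] at hnotP
      exact hnotP
    have h1 : dens2 (Abad t) m n ≤ dens2 (Abad ((1 : ℝ) / (i + 1))) m n :=
      dens2_mono (hAbad_mono (le_of_lt (lt_of_lt_of_le hi (min_le_left _ _)))) m n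
    calc dens2 (Abad t) m n ≤ dens2 (Abad ((1 : ℝ) / (i + 1))) m n := h1
    _ < 1 / (i + 1) := hlt
    _ < ε := lt_of_lt_of_le hi (min_le_right _ _)
  · -- I* ⇒ I
    rintro ⟨M, hMc, hconv⟩ t ht δ hδ
    obtain ⟨N, hN⟩ := hconv t ht δ hδ
    have hsub : {mn : ℕ × ℕ | δ ≤ dens2 (Abad t) mn.1 mn.2} ⊆
        Mᶜ ∪ {mn : ℕ × ℕ | mn.1 < N ∨ mn.2 < N} := by
      rintro ⟨m, n⟩ hmn
      by_cases hM : (m, n) ∈ M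
      · right
        by_contra hcon
        simp only [Set.mem_setOf_eq, not_or, not_lt] at hcon
        have := hN m n hM hcon.1 hcon.2
        exact absurd hmn (by simp only [Set.mem_setOf_eq]; exact not_le.mpr this)
      · exact Or.inl hM
    exact hI.1.2.2 _ _ hsub (hI.1.2.1 _ _ hMc (lowRows_mem hI N))
end
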